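/- If Ω is a bounded subset of a Banach space X, then the Hausdorff measure of noncompactness satisfies β(conv Ω) = β(Ω) = β(closure Ω). -/

import Mathlib

open Metric Pointwise

/-- Hausdorff measure of noncompactness: infimum of radii `r > 0` such that
`Ω` can be covered by finitely many balls of radius `r`. -/
noncomputable def hausdorffMNC {X : Type*} [NormedAddCommGroup X] (Ω : Set X) : ℝ :=
  sInf {r : ℝ | 0 < r ∧ ∃ s : Finset X, Ω ⊆ ⋃ x ∈ s, Metric.ball x r}

namespace MNCAux

variable {X : Type*} [NormedAddCommGroup X]

lemma mnc_bdd (Ω : Set X) :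
    BddBelow {r : ℝ | 0 < r ∧ ∃ s : Finset X, Ω ⊆ ⋃ x ∈ s, Metric.ball x r} :=
  ⟨0, fun _ hr => hr.1.le⟩

lemma mnc_nonempty (Ω : Set X) (hΩ : Bornology.IsBounded Ω) :
    {r : ℝ | 0 < r ∧ ∃ s : Finset X, Ω ⊆ ⋃ x ∈ s, Metric.ball x r}.Nonempty := by
  obtain ⟨R, hR, hsub⟩ := hΩ.subset_ball_lt 0 0
  exact ⟨R, hR, {0}, by simpa using hsub⟩

lemma mnc_mono {Ω Ω' : Set X} (h : Ω ⊆ Ω')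
    (h' : {r : ℝ | 0 < r ∧ ∃ s : Finset X, Ω' ⊆ ⋃ x ∈ s, Metric.ball x r}.Nonempty) :
    hausdorffMNC Ω ≤ hausdorffMNC Ω' := by
  refine csInf_le_csInf (mnc_bdd Ω) h' ?_
  rintro r ⟨hr, s, hs⟩
  exact ⟨hr, s, h.trans hs⟩

lemma conv_key {X : Type*} [NormedAddCommGroup X] [NormedSpace ℝ X] {Ω : Set X} {r ε : ℝ}
    (hr : r ∈ {r : ℝ | 0 < r ∧ ∃ s : Finset X, Ω ⊆ ⋃ x ∈ s, Metric.ball x r}) (hε : 0 < ε) :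
    (r + ε) ∈ {r : ℝ | 0 < r ∧
      ∃ s : Finset X, convexHull ℝ Ω ⊆ ⋃ x ∈ s, Metric.ball x r} := by
  obtain ⟨hr0, s, hs⟩ := hr
  have h1 : Ω ⊆ (↑s : Set X) + ball (0 : X) r := by
    intro x hx
    obtain ⟨c, hc, hxc⟩ := Set.mem_iUnion₂.1 (hs hx)
    exact ⟨c, hc, x - c, by simpa [mem_ball, dist_eq_norm] using hxc, add_sub_cancel c x⟩
  have h2 : convexHull ℝ Ω ⊆ convexHull ℝ (↑s : Set X) + ball (0 : X) r := by
    calc convexHull ℝ Ω ⊆ convexHull ℝ ((↑s : Set X) + ball 0 r) := convexHull_mono h1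
      _ = convexHull ℝ (↑s : Set X) + convexHull ℝ (ball 0 r) := convexHull_add _ _
      _ = convexHull ℝ (↑s : Set X) + ball 0 r := by
          rw [(convex_ball (0 : X) r).convexHull_eq]
  have hc : IsCompact (convexHull ℝ (↑s : Set X)) := s.finite_toSet.isCompact_convexHull ℝ
  obtain ⟨t, htfin, htcov⟩ := Metric.totallyBounded_iff.1 hc.totallyBounded ε hε
  refine ⟨by linarith, htfin.toFinset, ?_⟩
  intro z hz
  obtain ⟨a, ha, b, hb, rfl⟩ := h2 hz
  obtain ⟨y, hy, hay⟩ := Set.mem_iUnion₂.1 (htcov ha)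
  refine Set.mem_iUnion₂.2 ⟨y, htfin.mem_toFinset.2 hy, ?_⟩
  have hb' : ‖b‖ < r := by simpa [mem_ball, dist_eq_norm] using hb
  have hay' : ‖a - y‖ < ε := by simpa [mem_ball, dist_eq_norm] using hay
  have : ‖a + b - y‖ ≤ ‖a - y‖ + ‖b‖ := by
    calc ‖a + b - y‖ = ‖(a - y) + b‖ := by rw [add_sub_right_comm]
      _ ≤ ‖a - y‖ + ‖b‖ := norm_add_le _ _
  simp only [mem_ball, dist_eq_norm]
  linarith

lemma closure_key {Ω : Set X} {r ε : ℝ}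
    (hr : r ∈ {r : ℝ | 0 < r ∧ ∃ s : Finset X, Ω ⊆ ⋃ x ∈ s, Metric.ball x r}) (hε : 0 < ε) :
    (r + ε) ∈ {r : ℝ | 0 < r ∧
      ∃ s : Finset X, closure Ω ⊆ ⋃ x ∈ s, Metric.ball x r} := by
  obtain ⟨hr0, s, hs⟩ := hr
  refine ⟨by linarith, s, ?_⟩
  have h1 : closure Ω ⊆ ⋃ x ∈ s, closedBall x r := by
    refine closure_minimal (hs.trans ?_) ?_
    · exact Set.iUnion₂_mono fun x _ => ball_subset_closedBall
    · exact Set.Finite.isClosed_biUnion s.finite_toSet fun x _ => isClosed_closedBall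
  exact h1.trans (Set.iUnion₂_mono fun x _ =>
    closedBall_subset_ball (lt_add_of_pos_right r hε))

lemma le_of_key {Ω Ω' : Set X}
    (hne : {r : ℝ | 0 < r ∧ ∃ s : Finset X, Ω ⊆ ⋃ x ∈ s, Metric.ball x r}.Nonempty)
    (key : ∀ r ε : ℝ,
      r ∈ {r : ℝ | 0 < r ∧ ∃ s : Finset X, Ω ⊆ ⋃ x ∈ s, Metric.ball x r} → 0 < ε →
      (r + ε) ∈ {r : ℝ | 0 < r ∧ ∃ s : Finset X, Ω' ⊆ ⋃ x ∈ s, Metric.ball x r}) :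
    hausdorffMNC Ω' ≤ hausdorffMNC Ω := by
  refine le_csInf hne fun r hr => ?_
  refine le_of_forall_pos_le_add fun ε hε => ?_
  exact csInf_le (mnc_bdd Ω') (key r ε hr hε)

end MNCAux

theorem mnc_convexHull_closure {X : Type*} [NormedAddCommGroup X] [NormedSpace ℝ X]
    [CompleteSpace X] (Ω : Set X) (hΩ : Bornology.IsBounded Ω) :
    hausdorffMNC (convexHull ℝ Ω) = hausdorffMNC Ω ∧
      hausdorffMNC (closure Ω) = hausdorffMNC Ω := by
  have hne := MNCAux.mnc_nonempty Ω hΩ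
  obtain ⟨r0, hr0⟩ := MNCAux.mnc_nonempty Ω hΩ
  constructor
  · refine le_antisymm (MNCAux.le_of_key hne fun r ε hr hε => MNCAux.conv_key hr hε) ?_
    exact MNCAux.mnc_mono (subset_convexHull ℝ Ω)
      ⟨r0 + 1, MNCAux.conv_key hr0 one_pos⟩
  · refine le_antisymm (MNCAux.le_of_key hne fun r ε hr hε => MNCAux.closure_key hr hε) ?_
    exact MNCAux.mnc_mono subset_closure ⟨r0 + 1, MNCAux.closure_key hr0 one_pos⟩
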